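/- Let Γ ≤ Cᵢ × D_j × D_k be a 2-injective 3-factor subdirect product with i ≤ 2 and j, k > 2. Then the projection of Γ onto the second and third factors, π̄₁(Γ) ≤ D_j × D_k, is a rotate-or-reflect group. -/

import Mathlib

/-- `Γ ≤ G₁ × G₂ × G₃` is a (3-factor) subdirect product:
the projection to each factor is surjective on `Γ`. -/
def IsSubdirect3 {G₁ G₂ G₃ : Type*} [Group G₁] [Group G₂] [Group G₃]
    (Γ : Subgroup (G₁ × G₂ × G₃)) : Prop :=
  (∀ x : G₁, ∃ g ∈ Γ, g.1 = x) ∧ (∀ x : G₂, ∃ g ∈ Γ, g.2.1 = x) ∧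
    (∀ x : G₃, ∃ g ∈ Γ, g.2.2 = x)

/-- `Γ ≤ G₁ × G₂ × G₃` is 2-injective: for each `i`, the projection of `Γ` onto
the product of the two factors other than `Gᵢ` is injective on `Γ`. -/
def IsTwoInjective3 {G₁ G₂ G₃ : Type*} [Group G₁] [Group G₂] [Group G₃]
    (Γ : Subgroup (G₁ × G₂ × G₃)) : Prop :=
  (∀ g ∈ Γ, ∀ h ∈ Γ, g.2.1 = h.2.1 → g.2.2 = h.2.2 → g = h) ∧
  (∀ g ∈ Γ, ∀ h ∈ Γ, g.1 = h.1 → g.2.2 = h.2.2 → g = h) ∧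
  (∀ g ∈ Γ, ∀ h ∈ Γ, g.1 = h.1 → g.2.1 = h.2.1 → g = h)

open DihedralGroup in
/-- An element of `Dₙ` is a rotation if it lies in the cyclic subgroup of
rotations `{r i}`; the identity counts as a rotation. -/
def IsRotation {n : ℕ} (x : DihedralGroup n) : Prop := ∃ i, x = r i

open DihedralGroup in
/-- An element of `Dₙ` is a reflection if it is of the form `sr i`. -/
def IsReflection {n : ℕ} (x : DihedralGroup n) : Prop := ∃ i, x = sr i

/-- A subgroup of a product of three dihedral groups is a rotate-or-reflect group if every
element is either a rotation in all components or a reflection in all components. -/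
def IsRotateOrReflect3 {n₁ n₂ n₃ : ℕ}
    (Γ : Subgroup (DihedralGroup n₁ × DihedralGroup n₂ × DihedralGroup n₃)) : Prop :=
  ∀ g ∈ Γ, (IsRotation g.1 ∧ IsRotation g.2.1 ∧ IsRotation g.2.2) ∨
    (IsReflection g.1 ∧ IsReflection g.2.1 ∧ IsReflection g.2.2)

/-- A subgroup of a product of two dihedral groups is a rotate-or-reflect group if every
element is either a rotation in both components or a reflection in both components. -/
def IsRotateOrReflect2 {n₁ n₂ : ℕ}
    (Γ : Subgroup (DihedralGroup n₁ × DihedralGroup n₂)) : Prop :=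
  ∀ g ∈ Γ, (IsRotation g.1 ∧ IsRotation g.2) ∨ (IsReflection g.1 ∧ IsReflection g.2)



open DihedralGroup

lemma myinv_r {n : ℕ} (a : ZMod n) : (r a)⁻¹ = r (-a) := rfl
lemma myinv_sr {n : ℕ} (a : ZMod n) : (sr a)⁻¹ = sr a := rfl

lemma two_ne {n : ℕ} (hn : 2 < n) : (2 : ZMod n) ≠ 0 := by
  intro h2
  have h : ((2:ℕ) : ZMod n) = 0 := by exact_mod_cast h2
  rw [ZMod.natCast_eq_zero_iff] at h
  exact absurd (Nat.le_of_dvd (by norm_num) h) (by omega)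

theorem statement_13 {i j k : ℕ} (hip : 0 < i) (hi : i ≤ 2) (hj : 2 < j) (hk : 2 < k)
    (Γ : Subgroup (Multiplicative (ZMod i) × DihedralGroup j × DihedralGroup k))
    (hsd : IsSubdirect3 Γ) (h2inj : IsTwoInjective3 Γ) :
    IsRotateOrReflect2
      (Γ.map (MonoidHom.snd (Multiplicative (ZMod i))
        (DihedralGroup j × DihedralGroup k))) := by
  have hsq1 : ∀ x : Multiplicative (ZMod i), x * x = 1 := by
    interval_cases i
    · intro x; exact Subsingleton.elim _ _
    · decide
  rintro g ⟨γ, hγ, rfl⟩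
  obtain ⟨x, y, z⟩ := γ
  cases y with
  | r a =>
    cases z with
    | r b => exact Or.inl ⟨⟨a, rfl⟩, ⟨b, rfl⟩⟩
    | sr b =>
      exfalso
      have hm := Γ.mul_mem hγ hγ
      have hsq : ((x, r a, sr b) : Multiplicative (ZMod i) × DihedralGroup j × DihedralGroup k)
          * (x, r a, sr b) = (1, r (a+a), 1) := by
        simp [Prod.ext_iff, hsq1, r_mul_r, sr_mul_sr, one_def, -r_zero]
      rw [hsq] at hm
      have he := h2inj.2.1 _ hm 1 Γ.one_mem rfl rfl
      have ha : a + a = 0 := by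
        have := congrArg (fun p => p.2.1) he
        simpa [one_def, -r_zero] using this
      obtain ⟨h, hh, hh3⟩ := hsd.2.2 (r 1)
      obtain ⟨u, v, w⟩ := h
      simp only at hh3
      subst hh3
      have hc : (u, v, r 1) * (x, r a, sr b) * (u, v, r 1)⁻¹ = (x, r a, sr b) := by
        apply h2inj.2.2 _ (Γ.mul_mem (Γ.mul_mem hh hγ) (Γ.inv_mem hh)) _ hγ
        · show u * x * u⁻¹ = x
          rw [mul_comm u x]; exact mul_inv_cancel_right x u
        · show v * r a * v⁻¹ = r a
          cases v with
          | r c => simp [r_mul_r, myinv_r, add_comm, add_assoc, add_left_comm]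
          | sr c =>
            have : -a = a := neg_eq_of_add_eq_zero_left ha
            simp [r_mul_sr, sr_mul_sr, myinv_sr, this]
      have h3 := congrArg (fun p => p.2.2) hc
      simp only [Prod.fst_mul, Prod.snd_mul, Prod.snd_inv, Prod.fst_inv] at h3
      rw [myinv_r, r_mul_sr, sr_mul_r] at h3
      have : b - 1 + -1 = b := by simpa using h3
      exact two_ne hk (by linear_combination -this)
  | sr a =>
    cases z with
    | sr b => exact Or.inr ⟨⟨a, rfl⟩, ⟨b, rfl⟩⟩
    | r b =>
      exfalso
      have hm := Γ.mul_mem hγ hγ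
      have hsq : ((x, sr a, r b) : Multiplicative (ZMod i) × DihedralGroup j × DihedralGroup k)
          * (x, sr a, r b) = (1, 1, r (b+b)) := by
        simp [Prod.ext_iff, hsq1, r_mul_r, sr_mul_sr, one_def, -r_zero]
      rw [hsq] at hm
      have he := h2inj.2.2 _ hm 1 Γ.one_mem rfl rfl
      have hb : b + b = 0 := by
        have := congrArg (fun p => p.2.2) he
        simpa [one_def, -r_zero] using this
      obtain ⟨h, hh, hh2⟩ := hsd.2.1 (r 1)
      obtain ⟨u, v, w⟩ := h
      simp only at hh2
      subst hh2
      have hc : (u, r 1, w) * (x, sr a, r b) * (u, r 1, w)⁻¹ = (x, sr a, r b) := by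
        apply h2inj.2.1 _ (Γ.mul_mem (Γ.mul_mem hh hγ) (Γ.inv_mem hh)) _ hγ
        · show u * x * u⁻¹ = x
          rw [mul_comm u x]; exact mul_inv_cancel_right x u
        · show w * r b * w⁻¹ = r b
          cases w with
          | r c => simp [r_mul_r, myinv_r, add_comm, add_assoc, add_left_comm]
          | sr c =>
            have : -b = b := neg_eq_of_add_eq_zero_left hb
            simp [r_mul_sr, sr_mul_sr, myinv_sr, this]
      have h3 := congrArg (fun p => p.2.1) hc
      simp only [Prod.fst_mul, Prod.snd_mul, Prod.snd_inv, Prod.fst_inv] at h3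
      rw [myinv_r, r_mul_sr, sr_mul_r] at h3
      have : a - 1 + -1 = a := by simpa using h3
      exact two_ne hj (by linear_combination -this)
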